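/- Let N ≥ 1 and let R_∞ be a Borel probability measure on ℝ^N. Let q be a Borel probability measure with q ≪ R_∞, H(q|R_∞) < ∞ and ∫ |z|² dq(z) < ∞. Suppose (R_n) is a sequence of Borel probability measures of the form R_n = r_n · R_∞ with Borel densities r_n > 0 satisfying: (i) there is a constant c > 0 such that log r_n(z) ≥ −c(1 + |z|²) for all n and all z; (ii) liminf_{n→∞} log r_n(z) ≥ 0 for R_∞-almost every z. Then limsup_{n→∞} H(q|R_n) ≤ H(q|R_∞). -/

import Mathlib

open MeasureTheory Filter Topology

/- Relative entropy `H(P|Q)`: `∫ log (dP/dQ) dP` if `P ≪ Q` (and the integral makes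
sense), and `+∞` otherwise. -/
open Classical in
noncomputable def relEntropy {α : Type*} [MeasurableSpace α] (P Q : Measure α) : EReal :=
  if P ≪ Q ∧ Integrable (llr P Q) P then ((∫ x, llr P Q x ∂P : ℝ) : EReal) else ⊤

/-- The set of couplings `Π(μ,ν)`: probability measures on `α × α` with first marginal `μ`
and second marginal `ν`. -/
def couplings {α : Type*} [MeasurableSpace α] (μ ν : Measure α) : Set (Measure (α × α)) :=
  {p | IsProbabilityMeasure p ∧ p.map Prod.fst = μ ∧ p.map Prod.snd = ν}

/-- The set `Π_X(μ,ν)`: probability measures on `(α × α) × (α × α)`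
(points `((x₁,v₁),(x₂,v₂))`) whose pushforwards under `((x₁,v₁),(x₂,v₂)) ↦ x₁` and
`((x₁,v₁),(x₂,v₂)) ↦ x₂` are `μ` and `ν` respectively. -/
def PiX {α : Type*} [MeasurableSpace α] (μ ν : Measure α) :
    Set (Measure ((α × α) × (α × α))) :=
  {p | IsProbabilityMeasure p ∧ p.map (fun z => z.1.1) = μ ∧ p.map (fun z => z.2.1) = ν}

/-- Γ-limsup inequality: under a uniform Gaussian-type lower bound on the
densities and a.e. asymptotic nonnegativity of their logarithms, the relative entropies
with respect to the tilted measures are asymptotically bounded by `H(q|R_∞)`. -/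
theorem relEntropy_gamma_limsup
    (N : ℕ) (hN : 1 ≤ N)
    (Rinf : Measure (EuclideanSpace ℝ (Fin N))) [IsProbabilityMeasure Rinf]
    (q : Measure (EuclideanSpace ℝ (Fin N))) [IsProbabilityMeasure q]
    (hac : q ≪ Rinf) (hfin : relEntropy q Rinf ≠ ⊤)
    (hmom : Integrable (fun z => ‖z‖ ^ 2) q)
    (rn : ℕ → EuclideanSpace ℝ (Fin N) → ℝ)
    (hrn_meas : ∀ n, Measurable (rn n))
    (hrn_pos : ∀ n z, 0 < rn n z)
    (Rn : ℕ → Measure (EuclideanSpace ℝ (Fin N)))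
    (hRn : ∀ n, Rn n = Rinf.withDensity (fun z => ENNReal.ofReal (rn n z)))
    (hRn_prob : ∀ n, IsProbabilityMeasure (Rn n))
    (c : ℝ) (hc : 0 < c)
    (hlow : ∀ n z, -(c * (1 + ‖z‖ ^ 2)) ≤ Real.log (rn n z))
    (hliminf : ∀ᵐ z ∂ Rinf,
      (0 : EReal) ≤ liminf (fun n => ((Real.log (rn n z) : ℝ) : EReal)) atTop) :
    limsup (fun n => relEntropy q (Rn n)) atTop ≤ relEntropy q Rinf := by
  classical
  haveI := Measure.haveLebesgueDecomposition_of_sigmaFinite q Rinf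
  -- basic integrability from finiteness of H(q|Rinf)
  have h_int : Integrable (llr q Rinf) q := by
    by_contra h
    exact hfin (by rw [relEntropy, if_neg (fun hh => h hh.2)])
  set H : ℝ := ∫ x, llr q Rinf x ∂q with hH
  have hRE_inf : relEntropy q Rinf = ((H : ℝ) : EReal) := by
    rw [relEntropy, if_pos ⟨hac, h_int⟩]
  -- the densities integrate to 1
  have h1 : ∀ n, ∫⁻ z, ENNReal.ofReal (rn n z) ∂ Rinf = 1 := by
    intro n
    have := (hRn_prob n).measure_univ
    rw [hRn n, withDensity_apply _ MeasurableSet.univ, Measure.restrict_univ] at this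
    exact this
  have hrn_int : ∀ n, Integrable (rn n) Rinf := by
    intro n
    refine ⟨(hrn_meas n).aestronglyMeasurable, ?_⟩
    rw [hasFiniteIntegral_iff_ofReal (ae_of_all _ fun z => (hrn_pos n z).le), h1 n]
    exact ENNReal.one_lt_top
  have hrn_integral : ∀ n, ∫ z, rn n z ∂ Rinf = 1 := by
    intro n
    rw [integral_eq_lintegral_of_nonneg_ae (ae_of_all _ fun z => (hrn_pos n z).le)
      (hrn_meas n).aestronglyMeasurable, h1 n, ENNReal.toReal_one]
  have hexp : ∀ n, Integrable (fun x => Real.exp (Real.log (rn n x))) Rinf := fun n =>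
    (hrn_int n).congr (ae_of_all _ fun z => (Real.exp_log (hrn_pos n z)).symm)
  -- Rn n is the exponential tilt of Rinf by log (rn n)
  have h_tilt : ∀ n, Rn n = Rinf.tilted (fun z => Real.log (rn n z)) := by
    intro n
    have hint : ∫ z, Real.exp (Real.log (rn n z)) ∂ Rinf = 1 := by
      rw [integral_congr_ae (ae_of_all _ fun z => Real.exp_log (hrn_pos n z)), hrn_integral n]
    rw [hRn n, Measure.tilted]
    congr 1
    funext x
    rw [hint, Real.exp_log (hrn_pos n x), div_one]
  -- integrability of the moment bound
  have hφ : Integrable (fun z : EuclideanSpace ℝ (Fin N) => c * (1 + ‖z‖ ^ 2)) q :=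
    ((integrable_const (1 : ℝ)).add hmom).const_mul c
  -- Young's inequality s * t ≤ s log s + exp t
  have young : ∀ s t : ℝ, 0 ≤ s → s * t ≤ s * Real.log s + Real.exp t := by
    intro s t hs
    rcases hs.eq_or_lt with h | h
    · simp only [← h, zero_mul, zero_add]
      exact (Real.exp_pos t).le
    · have h1 := Real.add_one_le_exp (t - Real.log s)
      rw [Real.exp_sub, Real.exp_log h] at h1
      have h2 := (le_div_iff₀ h).mp h1
      nlinarith
  -- integrability of log (rn n) wrt q
  have hL : ∀ n, Integrable (fun z => Real.log (rn n z)) q := by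
    intro n
    -- positive part
    have hP : Integrable (fun z => max (Real.log (rn n z)) 0) q := by
      rw [← integrable_rnDeriv_smul_iff hac]
      have hmeas : AEStronglyMeasurable
          (fun x => (q.rnDeriv Rinf x).toReal • max (Real.log (rn n x)) 0) Rinf := by
        exact (((Measure.measurable_rnDeriv q Rinf).ennreal_toReal.mul
          ((Real.measurable_log.comp (hrn_meas n)).max measurable_const))).aestronglyMeasurable
      refine Integrable.mono'
        ((((integrable_rnDeriv_smul_iff hac).mpr h_int).abs).add
          ((hrn_int n).add (integrable_const 1))) hmeas (ae_of_all _ fun x => ?_)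
      have hs0 : 0 ≤ (q.rnDeriv Rinf x).toReal := ENNReal.toReal_nonneg
      have hP0 : 0 ≤ max (Real.log (rn n x)) 0 := le_max_right _ _
      have hy := young (q.rnDeriv Rinf x).toReal (max (Real.log (rn n x)) 0) hs0
      have hexpP : Real.exp (max (Real.log (rn n x)) 0) ≤ rn n x + 1 := by
        rcases le_total (Real.log (rn n x)) 0 with hle | hle
        · rw [max_eq_right hle, Real.exp_zero]
          linarith [(hrn_pos n x).le]
        · rw [max_eq_left hle, Real.exp_log (hrn_pos n x)]
          linarith
      have habs : |(q.rnDeriv Rinf x).toReal * llr q Rinf x|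
          = |(q.rnDeriv Rinf x).toReal • llr q Rinf x| := rfl
      simp only [smul_eq_mul, Real.norm_eq_abs, Pi.add_apply]
      rw [abs_of_nonneg (mul_nonneg hs0 hP0)]
      have hllr : llr q Rinf x = Real.log (q.rnDeriv Rinf x).toReal := rfl
      calc (q.rnDeriv Rinf x).toReal * max (Real.log (rn n x)) 0
          ≤ (q.rnDeriv Rinf x).toReal * Real.log (q.rnDeriv Rinf x).toReal
            + Real.exp (max (Real.log (rn n x)) 0) := hy
        _ ≤ |(q.rnDeriv Rinf x).toReal * llr q Rinf x| + (rn n x + 1) := by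
            rw [hllr]
            have := le_abs_self ((q.rnDeriv Rinf x).toReal
              * Real.log (q.rnDeriv Rinf x).toReal)
            linarith
    refine (hP.add hφ).mono'
      ((Real.measurable_log.comp (hrn_meas n)).aestronglyMeasurable)
      (ae_of_all _ fun x => ?_)
    have h1 := hlow n x
    have h2 : (0:ℝ) ≤ c * (1 + ‖x‖ ^ 2) := by positivity
    rw [Real.norm_eq_abs, abs_le]
    constructor
    · have := le_max_right (Real.log (rn n x)) 0
      simp only [Pi.add_apply]
      linarith
    · have := le_max_left (Real.log (rn n x)) 0
      simp only [Pi.add_apply]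
      linarith
  -- the entropy formula for the tilted measures
  have hRE_n : ∀ n, relEntropy q (Rn n)
      = ((H - ∫ z, Real.log (rn n z) ∂q : ℝ) : EReal) := by
    intro n
    have hacn : q ≪ Rn n := by
      rw [h_tilt n]
      exact hac.trans (absolutelyContinuous_tilted (hexp n))
    have hint_n : Integrable (llr q (Rn n)) q := by
      rw [h_tilt n]
      exact integrable_llr_tilted_right hac (hL n) h_int (hexp n)
    have hint1 : ∫ z, Real.exp (Real.log (rn n z)) ∂ Rinf = 1 := by
      rw [integral_congr_ae (ae_of_all _ fun z => Real.exp_log (hrn_pos n z)), hrn_integral n]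
    rw [relEntropy, if_pos ⟨hacn, hint_n⟩]
    norm_cast
    rw [h_tilt n, integral_llr_tilted_right hac (hL n) (hexp n) h_int, hint1, Real.log_one]
    ring
  -- the constant C and its positivity
  set C : ℝ := ∫ z, c * (1 + ‖z‖ ^ 2) ∂q with hC
  have hC_pos : 0 < C := by
    have hle : c ≤ C := by
      rw [hC]
      calc c = ∫ _z, c ∂q := by simp
        _ ≤ ∫ z, c * (1 + ‖z‖ ^ 2) ∂q := by
            refine integral_mono (integrable_const c) hφ fun z => ?_
            have : (0:ℝ) ≤ ‖z‖ ^ 2 := by positivity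
            nlinarith
    linarith
  -- nonnegativity and integrability of g n = log rn n + φ
  have hg_nonneg : ∀ n z, 0 ≤ Real.log (rn n z) + c * (1 + ‖z‖ ^ 2) := by
    intro n z
    have := hlow n z
    linarith
  have hg_int : ∀ n, Integrable (fun z => Real.log (rn n z) + c * (1 + ‖z‖ ^ 2)) q :=
    fun n => (hL n).add hφ
  have hg_meas : ∀ n, Measurable (fun z : EuclideanSpace ℝ (Fin N) =>
      ENNReal.ofReal (Real.log (rn n z) + c * (1 + ‖z‖ ^ 2))) := by
    intro n
    exact ((Real.measurable_log.comp (hrn_meas n)).add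
      ((measurable_const.add (measurable_norm.pow_const 2)).const_mul c)).ennreal_ofReal
  -- Fatou
  have hfatou : ENNReal.ofReal C ≤ liminf (fun n =>
      ∫⁻ z, ENNReal.ofReal (Real.log (rn n z) + c * (1 + ‖z‖ ^ 2)) ∂q) atTop := by
    refine le_trans ?_ (lintegral_liminf_le hg_meas)
    rw [ofReal_integral_eq_lintegral_ofReal hφ (ae_of_all _ fun z => by positivity)]
    refine lintegral_mono_ae ?_
    filter_upwards [hac.ae_le hliminf] with z hz
    rw [le_liminf_iff]
    intro y hy
    have hφz : (0:ℝ) < c * (1 + ‖z‖ ^ 2) := by positivity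
    have hy_top : y ≠ ⊤ := (hy.trans_le le_top).ne
    have hy' : y.toReal < c * (1 + ‖z‖ ^ 2) :=
      (ENNReal.lt_ofReal_iff_toReal_lt hy_top).mp hy
    have hε : (0:ℝ) < c * (1 + ‖z‖ ^ 2) - y.toReal := by linarith
    have hlt : ((-(c * (1 + ‖z‖ ^ 2) - y.toReal) : ℝ) : EReal)
        < liminf (fun n => ((Real.log (rn n z) : ℝ) : EReal)) atTop := by
      refine lt_of_lt_of_le ?_ hz
      exact_mod_cast neg_neg_iff_pos.mpr hε
    filter_upwards [eventually_lt_of_lt_liminf hlt] with n hn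
    have hn' : -(c * (1 + ‖z‖ ^ 2) - y.toReal) < Real.log (rn n z) := by
      exact_mod_cast hn
    have hgz : y.toReal < Real.log (rn n z) + c * (1 + ‖z‖ ^ 2) := by linarith
    have h0g : (0:ℝ) < Real.log (rn n z) + c * (1 + ‖z‖ ^ 2) :=
      lt_of_le_of_lt ENNReal.toReal_nonneg hgz
    calc y = ENNReal.ofReal y.toReal := (ENNReal.ofReal_toReal hy_top).symm
      _ < ENNReal.ofReal (Real.log (rn n z) + c * (1 + ‖z‖ ^ 2)) :=
          (ENNReal.ofReal_lt_ofReal_iff h0g).mpr hgz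
  -- eventual lower bound on the integrals of log rn n
  have hliminfI : ∀ r : ℝ, r < 0 → ∀ᶠ n in atTop, r < ∫ z, Real.log (rn n z) ∂q := by
    intro r hr
    set r' : ℝ := max r (-C / 2) with hr'
    have hr'0 : r' < 0 := max_lt hr (by linarith)
    have hr'C : -C / 2 ≤ r' := le_max_right _ _
    have hb : ENNReal.ofReal (C + r') < ENNReal.ofReal C :=
      (ENNReal.ofReal_lt_ofReal_iff hC_pos).mpr (by linarith)
    filter_upwards [eventually_lt_of_lt_liminf (lt_of_lt_of_le hb hfatou)] with n hn
    rw [← ofReal_integral_eq_lintegral_ofReal (hg_int n)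
      (ae_of_all _ fun z => hg_nonneg n z)] at hn
    have h2 : C + r' < ∫ z, (Real.log (rn n z) + c * (1 + ‖z‖ ^ 2)) ∂q := by
      by_contra hcon
      push_neg at hcon
      exact absurd (ENNReal.ofReal_le_ofReal hcon) hn.not_ge
    rw [integral_add (hL n) hφ] at h2
    have : r ≤ r' := le_max_left _ _
    linarith
  -- conclusion
  rw [hRE_inf]
  by_contra hcon
  push_neg at hcon
  obtain ⟨b, hb1, hb2⟩ := EReal.exists_between_coe_real hcon
  have hfreq : ∃ᶠ n in atTop, (b : EReal) < relEntropy q (Rn n) :=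
    frequently_lt_of_lt_limsup (by isBoundedDefault) hb2
  have hHb : H - b < 0 := by
    have : H < b := EReal.coe_lt_coe_iff.mp hb1
    linarith
  obtain ⟨n, hn1, hn2⟩ := (hfreq.and_eventually (hliminfI (H - b) hHb)).exists
  rw [hRE_n n] at hn1
  have : b < H - ∫ z, Real.log (rn n z) ∂q := EReal.coe_lt_coe_iff.mp hn1
  linarith
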